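/- Shepherdson's system Sh is sound and complete with respect to all set-theoretic models allowing empty denotations: a formula is a thesis of Sh if and only if it is true in every model (U, D) where U is an arbitrary set and D assigns arbitrary subsets of U to name letters. -/

import Mathlib

inductive LForm : Type
  | atomA : Nat → Nat → LForm
  | atomI : Nat → Nat → LForm
  | atomE : Nat → Nat → LForm
  | atomO : Nat → Nat → LForm
  | neg : LForm → LForm
  | conj : LForm → LForm → LForm
  | disj : LForm → LForm → LForm
  | impl : LForm → LForm → LForm
  | equiv : LForm → LForm → LForm

namespace LForm

/-- Boolean evaluation of a formula given a Boolean valuation of the atoms. -/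
def beval (vA vI vE vO : Nat → Nat → Bool) : LForm → Bool
  | atomA s p => vA s p
  | atomI s p => vI s p
  | atomE s p => vE s p
  | atomO s p => vO s p
  | neg φ => !(beval vA vI vE vO φ)
  | conj φ ψ => beval vA vI vE vO φ && beval vA vI vE vO ψ
  | disj φ ψ => beval vA vI vE vO φ || beval vA vI vE vO ψ
  | impl φ ψ => !(beval vA vI vE vO φ) || beval vA vI vE vO ψ
  | equiv φ ψ => beval vA vI vE vO φ == beval vA vI vE vO ψ

/-- Substitution instances of classical propositional tautologies. -/
def Taut (φ : LForm) : Prop := ∀ vA vI vE vO, beval vA vI vE vO φ = true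

/-- Uniform substitution of name letters. -/
def rename (σ : Nat → Nat) : LForm → LForm
  | atomA s p => atomA (σ s) (σ p)
  | atomI s p => atomI (σ s) (σ p)
  | atomE s p => atomE (σ s) (σ p)
  | atomO s p => atomO (σ s) (σ p)
  | neg φ => neg (rename σ φ)
  | conj φ ψ => conj (rename σ φ) (rename σ ψ)
  | disj φ ψ => disj (rename σ φ) (rename σ ψ)
  | impl φ ψ => impl (rename σ φ) (rename σ ψ)
  | equiv φ ψ => equiv (rename σ φ) (rename σ ψ)

/-- Set-theoretic interpretation in a model given by a denotation function. -/
def eval {α : Type} (D : Nat → Set α) : LForm → Prop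
  | atomA s p => D s ⊆ D p
  | atomI s p => (D s ∩ D p).Nonempty
  | atomE s p => ¬ (D s ∩ D p).Nonempty
  | atomO s p => ¬ D s ⊆ D p
  | neg φ => ¬ eval D φ
  | conj φ ψ => eval D φ ∧ eval D ψ
  | disj φ ψ => eval D φ ∨ eval D ψ
  | impl φ ψ => eval D φ → eval D ψ
  | equiv φ ψ => eval D φ ↔ eval D ψ

/-- Derivability from a set of specific axioms, over classical propositional
logic, with modus ponens and uniform substitution. -/
inductive Deriv (Ax : LForm → Prop) : LForm → Prop
  | ax {φ} : Ax φ → Deriv Ax φ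
  | taut {φ} : Taut φ → Deriv Ax φ
  | mp {φ ψ} : Deriv Ax (impl φ ψ) → Deriv Ax φ → Deriv Ax ψ
  | subst {φ} (σ : Nat → Nat) : Deriv Ax φ → Deriv Ax (rename σ φ)

/-- The specific axioms of Łukasiewicz's calculus. -/
def LukAx : LForm → Prop := fun φ =>
  (∃ S, φ = atomA S S) ∨
  (∃ S, φ = atomI S S) ∨
  (∃ M P S, φ = impl (conj (atomA M P) (atomA S M)) (atomA S P)) ∨
  (∃ M P S, φ = impl (conj (atomA M P) (atomI M S)) (atomI S P)) ∨
  (∃ S P, φ = equiv (atomE S P) (neg (atomI S P))) ∨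
  (∃ S P, φ = equiv (atomO S P) (neg (atomA S P)))

/-- The specific axioms of Shepherdson's system Sh. -/
def ShAx : LForm → Prop := fun φ =>
  (∃ S, φ = atomA S S) ∨
  (∃ M P S, φ = impl (conj (atomA M P) (atomA S M)) (atomA S P)) ∨
  (∃ M P S, φ = impl (conj (atomA M P) (atomI M S)) (atomI S P)) ∨
  (∃ S P, φ = impl (atomI S P) (atomI S S)) ∨
  (∃ S P, φ = impl (neg (atomI S S)) (atomA S P)) ∨
  (∃ S P, φ = equiv (atomE S P) (neg (atomI S P))) ∨
  (∃ S P, φ = equiv (atomO S P) (neg (atomA S P)))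

end LForm

open LForm

namespace ShAux

open Classical

/-- The name letters occurring in a formula. -/
def letters : LForm → List Nat
  | atomA s p => [s, p]
  | atomI s p => [s, p]
  | atomE s p => [s, p]
  | atomO s p => [s, p]
  | LForm.neg φ => letters φ
  | LForm.conj φ ψ => letters φ ++ letters ψ
  | LForm.disj φ ψ => letters φ ++ letters ψ
  | LForm.impl φ ψ => letters φ ++ letters ψ
  | LForm.equiv φ ψ => letters φ ++ letters ψ

noncomputable def cA {α : Type} (D : Nat → Set α) : Nat → Nat → Bool :=
  fun s p => decide (D s ⊆ D p)
noncomputable def cI {α : Type} (D : Nat → Set α) : Nat → Nat → Bool :=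
  fun s p => decide ((D s ∩ D p).Nonempty)

theorem eval_beval {α : Type} (D : Nat → Set α) (ψ : LForm) :
    eval D ψ ↔ beval (cA D) (cI D) (fun s p => !(cI D s p)) (fun s p => !(cA D s p)) ψ = true := by
  induction ψ with
  | atomA s p => simp [eval, beval, cA]
  | atomI s p => simp [eval, beval, cI]
  | atomE s p => simp [eval, beval, cI]
  | atomO s p => simp [eval, beval, cA]
  | neg φ ih => simp [eval, beval, ih]
  | conj φ ψ ihφ ihψ => simp [eval, beval, ihφ, ihψ]
  | disj φ ψ ihφ ihψ => simp [eval, beval, ihφ, ihψ]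
  | impl φ ψ ihφ ihψ =>
      simp only [eval, beval, ihφ, ihψ, Bool.or_eq_true, Bool.not_eq_true']
      rcases Bool.eq_false_or_eq_true
        (beval (cA D) (cI D) (fun s p => !cI D s p) (fun s p => !cA D s p) φ) with h1 | h1 <;>
      rcases Bool.eq_false_or_eq_true
        (beval (cA D) (cI D) (fun s p => !cI D s p) (fun s p => !cA D s p) ψ) with h2 | h2 <;>
      simp [h1, h2]
  | equiv φ ψ ihφ ihψ =>
      simp only [eval, beval, ihφ, ihψ, beq_iff_eq]
      rcases Bool.eq_false_or_eq_true
        (beval (cA D) (cI D) (fun s p => !cI D s p) (fun s p => !cA D s p) φ) with h1 | h1 <;>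
      rcases Bool.eq_false_or_eq_true
        (beval (cA D) (cI D) (fun s p => !cI D s p) (fun s p => !cA D s p) ψ) with h2 | h2 <;>
      simp [h1, h2]

theorem beval_congr (vA vI vE vO vA' vI' vE' vO' : Nat → Nat → Bool) :
    ∀ ψ : LForm, (∀ s p, s ∈ letters ψ → p ∈ letters ψ →
      vA s p = vA' s p ∧ vI s p = vI' s p ∧ vE s p = vE' s p ∧ vO s p = vO' s p) →
    beval vA vI vE vO ψ = beval vA' vI' vE' vO' ψ := by
  intro ψ
  induction ψ with
  | atomA s p => intro h; exact (h s p (by simp [letters]) (by simp [letters])).1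
  | atomI s p => intro h; exact (h s p (by simp [letters]) (by simp [letters])).2.1
  | atomE s p => intro h; exact (h s p (by simp [letters]) (by simp [letters])).2.2.1
  | atomO s p => intro h; exact (h s p (by simp [letters]) (by simp [letters])).2.2.2
  | neg φ ih => intro h; simp only [beval]; rw [ih h]
  | conj φ ψ ihφ ihψ =>
      intro h; simp only [beval]
      rw [ihφ (fun s p hs hp => h s p (by simp [letters, hs]) (by simp [letters, hp])),
          ihψ (fun s p hs hp => h s p (by simp [letters, hs]) (by simp [letters, hp]))]
  | disj φ ψ ihφ ihψ =>
      intro h; simp only [beval]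
      rw [ihφ (fun s p hs hp => h s p (by simp [letters, hs]) (by simp [letters, hp])),
          ihψ (fun s p hs hp => h s p (by simp [letters, hs]) (by simp [letters, hp]))]
  | impl φ ψ ihφ ihψ =>
      intro h; simp only [beval]
      rw [ihφ (fun s p hs hp => h s p (by simp [letters, hs]) (by simp [letters, hp])),
          ihψ (fun s p hs hp => h s p (by simp [letters, hs]) (by simp [letters, hp]))]
  | equiv φ ψ ihφ ihψ =>
      intro h; simp only [beval]
      rw [ihφ (fun s p hs hp => h s p (by simp [letters, hs]) (by simp [letters, hp])),
          ihψ (fun s p hs hp => h s p (by simp [letters, hs]) (by simp [letters, hp]))]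

theorem eval_rename {α : Type} (D : Nat → Set α) (σ : Nat → Nat) (ψ : LForm) :
    eval D (rename σ ψ) ↔ eval (fun n => D (σ n)) ψ := by
  induction ψ <;> simp_all [rename, eval]

/-- Soundness. -/
theorem sound {φ : LForm} (h : Deriv ShAx φ) : ∀ (U : Type) (D : Nat → Set U), eval D φ := by
  induction h with
  | ax h =>
      intro U D
      rcases h with ⟨S, rfl⟩ | ⟨M, P, S, rfl⟩ | ⟨M, P, S, rfl⟩ | ⟨S, P, rfl⟩ |
        ⟨S, P, rfl⟩ | ⟨S, P, rfl⟩ | ⟨S, P, rfl⟩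
      · exact subset_rfl
      · rintro ⟨h1, h2⟩; exact h2.trans h1
      · rintro ⟨h1, ⟨x, hx1, hx2⟩⟩; exact ⟨x, hx2, h1 hx1⟩
      · rintro ⟨x, hx1, _⟩; exact ⟨x, hx1, hx1⟩
      · intro h1 x hx; exact absurd ⟨x, hx, hx⟩ h1
      · exact Iff.rfl
      · exact Iff.rfl
  | taut h => intro U D; rw [eval_beval]; exact h _ _ _ _
  | mp _ _ ih1 ih2 => intro U D; exact ih1 U D (ih2 U D)
  | subst σ _ ih => intro U D; rw [eval_rename]; exact ih U _

section Realize

variable (a i : Nat → Nat → Bool)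
variable (hrefl : ∀ s, a s s = true)
variable (hbarb : ∀ m p s, a m p = true → a s m = true → a s p = true)
variable (hdat : ∀ m p s, a m p = true → i m s = true → i s p = true)
variable (hstar : ∀ s p, i s p = true → i s s = true)
variable (hstar2 : ∀ s p, i s s = false → a s p = true)

include hrefl hdat in
theorem isym : ∀ s p, i s p = true → i p s = true := by
  intro s p h
  exact hdat s s p (hrefl s) h

include hrefl hdat in
theorem ilem : ∀ x y u v, i x y = true → a x u = true → a y v = true → i u v = true := by
  intro x y u v hxy hxu hyv
  have hyx := isym a i hrefl hdat x y hxy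
  have hxv : i x v = true := hdat y v x hyv hyx
  have hvu : i v u = true := hdat x u v hxu hxv
  exact isym a i hrefl hdat v u hvu

include hrefl hbarb hdat hstar hstar2 in
theorem realize :
    ∃ (D : Nat → Set {q : Nat × Nat // i q.1 q.2 = true}),
      (∀ s p, (D s ⊆ D p ↔ a s p = true)) ∧
      (∀ s p, ((D s ∩ D p).Nonempty ↔ i s p = true)) := by
  refine ⟨fun x => {q | a q.val.1 x = true ∨ a q.val.2 x = true}, fun s p => ?_, fun s p => ?_⟩
  · constructor
    · intro hsub
      rcases Bool.eq_false_or_eq_true (i s s) with h | h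
      · have hmem : (⟨(s, s), h⟩ : {q : Nat × Nat // i q.1 q.2 = true}) ∈
            {q : {q : Nat × Nat // i q.1 q.2 = true} | a q.val.1 s = true ∨ a q.val.2 s = true} := by
          simp only [Set.mem_setOf_eq]
          exact Or.inl (hrefl s)
        have h2 := hsub hmem
        simp only [Set.mem_setOf_eq] at h2
        rcases h2 with h1 | h1 <;> exact h1
      · exact hstar2 s p h
    · intro hsp q hq
      simp only [Set.mem_setOf_eq] at hq ⊢
      rcases hq with h1 | h1
      · exact Or.inl (hbarb s p q.val.1 hsp h1)
      · exact Or.inr (hbarb s p q.val.2 hsp h1)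
  · constructor
    · rintro ⟨q, hq1, hq2⟩
      simp only [Set.mem_setOf_eq] at hq1 hq2
      have hq := q.property
      rcases hq1 with h1 | h1 <;> rcases hq2 with h2 | h2
      · exact ilem a i hrefl hdat q.val.1 q.val.1 s p (hstar _ _ hq) h1 h2
      · exact ilem a i hrefl hdat q.val.1 q.val.2 s p hq h1 h2
      · exact ilem a i hrefl hdat q.val.2 q.val.1 s p (isym a i hrefl hdat _ _ hq) h1 h2
      · exact ilem a i hrefl hdat q.val.2 q.val.2 s p
          (hstar _ _ (isym a i hrefl hdat _ _ hq)) h1 h2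
    · intro hsp
      refine ⟨⟨(s, p), hsp⟩, ?_, ?_⟩ <;> simp only [Set.mem_setOf_eq]
      · exact Or.inl (hrefl s)
      · exact Or.inr (hrefl p)

end Realize

/-- A trivially true formula. -/
def trueF : LForm := LForm.impl (atomA 0 0) (atomA 0 0)

def bigConj : List LForm → LForm
  | [] => trueF
  | ψ :: l => LForm.conj ψ (bigConj l)

theorem taut_trueF : Taut trueF := by
  intro vA vI vE vO
  simp [trueF, beval]

theorem deriv_bigConj {Ax : LForm → Prop} {l : List LForm}
    (h : ∀ ψ ∈ l, Deriv Ax ψ) : Deriv Ax (bigConj l) := by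
  induction l with
  | nil => exact Deriv.taut taut_trueF
  | cons ψ l ih =>
      have h1 := h ψ List.mem_cons_self
      have h2 := ih (fun χ hχ => h χ (List.mem_cons_of_mem _ hχ))
      have t : Deriv Ax (LForm.impl ψ (LForm.impl (bigConj l) (LForm.conj ψ (bigConj l)))) := by
        apply Deriv.taut
        intro vA vI vE vO
        simp only [beval]
        cases beval vA vI vE vO ψ <;> cases beval vA vI vE vO (bigConj l) <;> rfl
      exact Deriv.mp (Deriv.mp t h1) h2

theorem beval_bigConj {vA vI vE vO : Nat → Nat → Bool} {l : List LForm}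
    (h : beval vA vI vE vO (bigConj l) = true) :
    ∀ ψ ∈ l, beval vA vI vE vO ψ = true := by
  induction l with
  | nil => intro ψ hψ; simp at hψ
  | cons χ l ih =>
      simp only [bigConj, beval, Bool.and_eq_true] at h
      intro ψ hψ
      rcases List.mem_cons.mp hψ with rfl | hψ
      · exact h.1
      · exact ih h.2 ψ hψ

def pairsC (L : List Nat) (f : Nat → Nat → LForm) : List LForm :=
  L.flatMap fun s => L.map fun p => f s p

def triplesC (L : List Nat) (f : Nat → Nat → Nat → LForm) : List LForm :=
  L.flatMap fun m => L.flatMap fun p => L.map fun s => f m p s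

theorem mem_pairsC {L : List Nat} {f : Nat → Nat → LForm} {s p : Nat}
    (hs : s ∈ L) (hp : p ∈ L) : f s p ∈ pairsC L f := by
  simp only [pairsC, List.mem_flatMap, List.mem_map]
  exact ⟨s, hs, p, hp, rfl⟩

theorem mem_triplesC {L : List Nat} {f : Nat → Nat → Nat → LForm} {m p s : Nat}
    (hm : m ∈ L) (hp : p ∈ L) (hs : s ∈ L) : f m p s ∈ triplesC L f := by
  simp only [triplesC, List.mem_flatMap, List.mem_map]
  exact ⟨m, hm, p, hp, s, hs, rfl⟩

def constraints (L : List Nat) : List LForm :=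
  (L.map fun s => atomA s s) ++
  triplesC L (fun m p s => LForm.impl (LForm.conj (atomA m p) (atomA s m)) (atomA s p)) ++
  triplesC L (fun m p s => LForm.impl (LForm.conj (atomA m p) (atomI m s)) (atomI s p)) ++
  pairsC L (fun s p => LForm.impl (atomI s p) (atomI s s)) ++
  pairsC L (fun s p => LForm.impl (LForm.neg (atomI s s)) (atomA s p)) ++
  pairsC L (fun s p => LForm.equiv (atomE s p) (LForm.neg (atomI s p))) ++
  pairsC L (fun s p => LForm.equiv (atomO s p) (LForm.neg (atomA s p)))

theorem constraints_shax {L : List Nat} {χ : LForm} (h : χ ∈ constraints L) : ShAx χ := by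
  simp only [constraints, List.mem_append, List.mem_map, pairsC, triplesC,
    List.mem_flatMap] at h
  rcases h with ((((((⟨s, _, rfl⟩ | ⟨m, _, p, _, ⟨s, _, rfl⟩⟩) | ⟨m, _, p, _, ⟨s, _, rfl⟩⟩) |
      ⟨s, _, ⟨p, _, rfl⟩⟩) | ⟨s, _, ⟨p, _, rfl⟩⟩) | ⟨s, _, ⟨p, _, rfl⟩⟩) | ⟨s, _, ⟨p, _, rfl⟩⟩)
  · exact Or.inl ⟨s, rfl⟩
  · exact Or.inr (Or.inl ⟨m, p, s, rfl⟩)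
  · exact Or.inr (Or.inr (Or.inl ⟨m, p, s, rfl⟩))
  · exact Or.inr (Or.inr (Or.inr (Or.inl ⟨s, p, rfl⟩)))
  · exact Or.inr (Or.inr (Or.inr (Or.inr (Or.inl ⟨s, p, rfl⟩))))
  · exact Or.inr (Or.inr (Or.inr (Or.inr (Or.inr (Or.inl ⟨s, p, rfl⟩)))))
  · exact Or.inr (Or.inr (Or.inr (Or.inr (Or.inr (Or.inr ⟨s, p, rfl⟩)))))

/-- Completeness. -/
theorem complete {φ : LForm} (H : ∀ (U : Type) (D : Nat → Set U), eval D φ) :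
    Deriv ShAx φ := by
  set L := letters φ with hL
  have hT : Taut (LForm.impl (bigConj (constraints L)) φ) := by
    intro vA vI vE vO
    simp only [beval]
    cases hC : beval vA vI vE vO (bigConj (constraints L))
    · rfl
    · rw [Bool.not_true, Bool.false_or]
      have hall := beval_bigConj hC
      -- extract constraint facts
      have hr : ∀ s ∈ L, vA s s = true := by
        intro s hs
        have := hall (atomA s s) (by
          simp only [constraints, List.mem_append]
          exact Or.inl (Or.inl (Or.inl (Or.inl (Or.inl (Or.inl
            (List.mem_map_of_mem hs)))))))
        simpa [beval] using this
      have hb : ∀ m ∈ L, ∀ p ∈ L, ∀ s ∈ L,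
          vA m p = true → vA s m = true → vA s p = true := by
        intro m hm p hp s hs h1 h2
        have := hall _ (by
          simp only [constraints, List.mem_append]
          exact Or.inl (Or.inl (Or.inl (Or.inl (Or.inl (Or.inr (mem_triplesC hm hp hs)))))))
        simp only [beval, Bool.or_eq_true, Bool.not_eq_true', Bool.and_eq_true] at this
        rcases this with h | h
        · rw [Bool.and_eq_false_iff] at h; rcases h with h | h <;> simp_all
        · exact h
      have hd : ∀ m ∈ L, ∀ p ∈ L, ∀ s ∈ L,
          vA m p = true → vI m s = true → vI s p = true := by
        intro m hm p hp s hs h1 h2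
        have := hall _ (by
          simp only [constraints, List.mem_append]
          exact Or.inl (Or.inl (Or.inl (Or.inl (Or.inr (mem_triplesC hm hp hs))))))
        simp only [beval, Bool.or_eq_true, Bool.not_eq_true', Bool.and_eq_false_iff] at this
        rcases this with (h | h) | h <;> simp_all
      have hst : ∀ s ∈ L, ∀ p ∈ L, vI s p = true → vI s s = true := by
        intro s hs p hp h1
        have := hall _ (by
          simp only [constraints, List.mem_append]
          exact Or.inl (Or.inl (Or.inl (Or.inr (mem_pairsC hs hp)))))
        simp only [beval, Bool.or_eq_true, Bool.not_eq_true'] at this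
        rcases this with h | h <;> simp_all
      have hst2 : ∀ s ∈ L, ∀ p ∈ L, vI s s = false → vA s p = true := by
        intro s hs p hp h1
        have := hall _ (by
          simp only [constraints, List.mem_append]
          exact Or.inl (Or.inl (Or.inr (mem_pairsC hs hp))))
        simp only [beval, Bool.or_eq_true, Bool.not_not, Bool.not_eq_true'] at this
        rcases this with h | h <;> simp_all
      have hE : ∀ s ∈ L, ∀ p ∈ L, vE s p = !(vI s p) := by
        intro s hs p hp
        have := hall _ (by
          simp only [constraints, List.mem_append]
          exact Or.inl (Or.inr (mem_pairsC hs hp)))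
        simp only [beval] at this
        exact eq_of_beq this
      have hO : ∀ s ∈ L, ∀ p ∈ L, vO s p = !(vA s p) := by
        intro s hs p hp
        have := hall _ (by
          simp only [constraints, List.mem_append]
          exact Or.inr (mem_pairsC hs hp))
        simp only [beval] at this
        exact eq_of_beq this
      -- extend the valuation to all letters
      set a : Nat → Nat → Bool :=
        fun s p => if s ∈ L then (if p ∈ L then vA s p else !(vI s s)) else true with ha
      set i : Nat → Nat → Bool :=
        fun s p => if s ∈ L ∧ p ∈ L then vI s p else false with hi
      have iLem : ∀ s p, i s p = true → s ∈ L ∧ p ∈ L ∧ vI s p = true := by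
        intro s p h
        rw [hi] at h
        by_cases hmem : s ∈ L ∧ p ∈ L
        · exact ⟨hmem.1, hmem.2, by simpa [hmem] using h⟩
        · simp [hmem] at h
      have hrefl' : ∀ s, a s s = true := by
        intro s
        by_cases hs : s ∈ L <;> simp [ha, hs, hr s]
      have hstar' : ∀ s p, i s p = true → i s s = true := by
        intro s p h
        obtain ⟨hs, hp, hv⟩ := iLem s p h
        simp [hi, hs, hst s hs p hp hv]
      have hstar2' : ∀ s p, i s s = false → a s p = true := by
        intro s p h
        by_cases hs : s ∈ L
        · have hss : vI s s = false := by
            by_contra hne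
            have hne2 : vI s s = true := by revert hne; cases vI s s <;> simp
            rw [hi] at h; simp [hs, hne2] at h
          by_cases hp : p ∈ L
          · simp [ha, hs, hp, hst2 s hs p hp hss]
          · simp [ha, hs, hp, hss]
        · simp [ha, hs]
      have hdat' : ∀ m p s, a m p = true → i m s = true → i s p = true := by
        intro m p s h1 h2
        obtain ⟨hm, hs, hv⟩ := iLem m s h2
        by_cases hp : p ∈ L
        · have hmm : vI m m = true := hst m hm s hs hv
          rw [ha] at h1; simp only [hm, hp, if_pos] at h1
          simp [hi, hs, hp, hd m hm p hp s hs h1 hv]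
        · exfalso
          have hmm : vI m m = true := hst m hm s hs hv
          rw [ha] at h1; simp [hm, hp, hmm] at h1
      have hbarb' : ∀ m p s, a m p = true → a s m = true → a s p = true := by
        intro m p s h1 h2
        by_cases hs : s ∈ L
        · by_cases hm : m ∈ L
          · rw [ha] at h2; simp only [hs, hm, if_pos] at h2
            by_cases hp : p ∈ L
            · rw [ha] at h1; simp only [hm, hp, if_pos] at h1
              simp [ha, hs, hp, hb m hm p hp s hs h1 h2]
            · -- p ∉ L : a s p = !(vI s s); show vI s s = false
              rw [ha] at h1; simp only [hm, hp, if_pos, if_neg] at h1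
              -- h1 : !(vI m m) = true
              have hmm : vI m m = false := by simpa using h1
              have hss : vI s s = false := by
                by_contra hne
                have hss : vI s s = true := by revert hne; cases vI s s <;> simp
                -- vA s m ∧ vI s s → vI m m
                have h3 : vI s m = true := hd s hs m hm s hs h2 hss
                have h4 : vI m s = true := hd s hs s hs m hm (hr s hs) h3
                have h5 : vI m m = true := hst m hm s hs h4
                simp [hmm] at h5
              simp [ha, hs, hp, hss]
          · -- m ∉ L : a s m = !(vI s s)
            rw [ha] at h2; simp only [hs, hm, if_pos, if_neg] at h2
            have hss : vI s s = false := by simpa using h2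
            by_cases hp : p ∈ L
            · simp [ha, hs, hp, hst2 s hs p hp hss]
            · simp [ha, hs, hp, hss]
        · simp [ha, hs]
      obtain ⟨D, hDA, hDI⟩ := realize a i hrefl' hbarb' hdat' hstar' hstar2'
      have hφ := H _ D
      rw [eval_beval] at hφ
      have hagree : ∀ s p, s ∈ letters φ → p ∈ letters φ →
          vA s p = cA D s p ∧ vI s p = cI D s p ∧
          vE s p = !(cI D s p) ∧ vO s p = !(cA D s p) := by
        intro s p hs hp
        rw [← hL] at hs hp
        have hA : cA D s p = vA s p := by
          have h1 : D s ⊆ D p ↔ a s p = true := hDA s p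
          have h2 : a s p = vA s p := by simp [ha, hs, hp]
          rw [h2] at h1
          simp only [cA]
          cases hval : vA s p
          · simp [hval] at h1; exact decide_eq_false h1
          · simp [hval] at h1; exact decide_eq_true h1
        have hI : cI D s p = vI s p := by
          have h1 : (D s ∩ D p).Nonempty ↔ i s p = true := hDI s p
          have h2 : i s p = vI s p := by simp [hi, hs, hp]
          rw [h2] at h1
          simp only [cI]
          cases hval : vI s p
          · simp [hval] at h1; exact decide_eq_false h1
          · simp [hval] at h1; exact decide_eq_true h1
        exact ⟨hA.symm, hI.symm, by rw [hE s hs p hp, hI], by rw [hO s hs p hp, hA]⟩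
      rw [beval_congr vA vI vE vO (cA D) (cI D)
        (fun s p => !(cI D s p)) (fun s p => !(cA D s p)) φ hagree]
      exact hφ
  exact Deriv.mp (Deriv.taut hT)
    (deriv_bigConj (fun ψ h => Deriv.ax (constraints_shax h)))

end ShAux

/-- Shepherdson's system Sh is sound and complete with respect to all models
allowing empty denotations: a formula is a thesis of Sh iff it is true in
every model `(U, D)` with `U` an arbitrary set and `D` assigning arbitrary
subsets of `U`. -/
theorem shepherdson_sound_complete (φ : LForm) :
    Deriv ShAx φ ↔ ∀ (U : Type) (D : Nat → Set U), eval D φ :=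
  ⟨ShAux.sound, ShAux.complete⟩
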